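/- A path-forest G with components of orders l_1 ≥ l_2 ≥ ... ≥ l_s has burning number at most k if and only if there is a collection of pairwise disjoint subsets A_1, ..., A_s of {1, 3, 5, ..., 2k−1} such that the sum of the elements of A_j is at least l_j for each j (equivalently, each component P_{l_j} can be covered by closed intervals of radii taken from distinct values in {0, 1, ..., k−1}). -/

import Mathlib

/-- The set of burned vertices after `t` rounds, given fire sources `x`. -/
def burnedSet {V : Type*} (G : SimpleGraph V) {k : ℕ} (x : Fin k → V) : ℕ → Set V
  | 0 => ∅
  | t + 1 =>
      burnedSet G x t ∪ {v | ∃ u ∈ burnedSet G x t, G.Adj u v} ∪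
        {v | ∃ h : t < k, v = x ⟨t, h⟩}

/-- `x` is a burning sequence: each source is unburned when chosen, and after
round `k` every vertex is burned. -/
def IsBurningSeq {V : Type*} (G : SimpleGraph V) {k : ℕ} (x : Fin k → V) : Prop :=
  (∀ i : Fin k, x i ∉ burnedSet G x i) ∧ burnedSet G x k = Set.univ

/-- The burning number: the least length of a burning sequence. -/
noncomputable def burningNumber {V : Type*} (G : SimpleGraph V) : ℕ :=
  sInf {k | ∃ x : Fin k → V, IsBurningSeq G x}

/-- The path-forest with component orders `l 0, …, l (s-1)`: component `j` is a
path on `l j` vertices. -/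
def pathForest {s : ℕ} (l : Fin s → ℕ) : SimpleGraph (Σ j : Fin s, Fin (l j)) :=
  SimpleGraph.fromRel fun x y => x.1 = y.1 ∧ (x.2 : ℕ) + 1 = (y.2 : ℕ)

lemma burnedSet_subset_succ {V : Type*} (G : SimpleGraph V) {k : ℕ} (x : Fin k → V) (t : ℕ) :
    burnedSet G x t ⊆ burnedSet G x (t + 1) := fun v hv => Or.inl (Or.inl hv)

lemma burnedSet_mono {V : Type*} (G : SimpleGraph V) {k : ℕ} (x : Fin k → V) {t t' : ℕ}
    (h : t ≤ t') : burnedSet G x t ⊆ burnedSet G x t' := by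
  induction t' with
  | zero => simp_all
  | succ n ih =>
    rcases Nat.lt_or_ge t (n+1) with h'|h'
    · exact (ih (Nat.lt_succ_iff.mp h')).trans (burnedSet_subset_succ G x n)
    · have : t = n + 1 := le_antisymm h h'
      subst this; exact subset_rfl

lemma burnedSet_congr {V : Type*} (G : SimpleGraph V) {k k' : ℕ} (x : Fin k → V)
    (y : Fin k' → V) {t : ℕ} (h1 : t ≤ k) (h2 : t ≤ k')
    (hxy : ∀ i (h : i < t), x ⟨i, lt_of_lt_of_le h h1⟩ = y ⟨i, lt_of_lt_of_le h h2⟩) :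
    burnedSet G x t = burnedSet G y t := by
  induction t with
  | zero => rfl
  | succ n ih =>
    have hn : n ≤ k := (Nat.le_succ n).trans h1
    have hn' : n ≤ k' := (Nat.le_succ n).trans h2
    have hB : burnedSet G x n = burnedSet G y n := by
      exact ih hn hn' (fun i h => hxy i (h.trans (Nat.lt_succ_self n)))
    show burnedSet G x n ∪ _ ∪ _ = burnedSet G y n ∪ _ ∪ _
    rw [hB]
    congr 1
    ext v
    constructor
    · rintro ⟨h, rfl⟩
      exact ⟨lt_of_lt_of_le (Nat.lt_succ_self n) h2, by rw [← hxy n (Nat.lt_succ_self n)]⟩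
    · rintro ⟨h, rfl⟩
      exact ⟨lt_of_lt_of_le (Nat.lt_succ_self n) h1, by rw [hxy n (Nat.lt_succ_self n)]⟩

open Classical in
noncomputable def greedy {V : Type*} [Nonempty V] (G : SimpleGraph V) {k : ℕ} (x : Fin k → V) :
    ℕ → V
  | t =>
    let B := burnedSet G (fun i : Fin k => if h : (i : ℕ) < t then greedy G x i else x i) t
    if h2 : ∃ hk : t < k, x ⟨t, hk⟩ ∉ B then x ⟨t, h2.choose⟩
    else if h : ∃ v, v ∉ B then h.choose else Classical.arbitrary V
  termination_by t => t
  decreasing_by exact h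

section Greedy
variable {V : Type*} [Nonempty V] (G : SimpleGraph V) {k : ℕ} (x : Fin k → V)

lemma greedy_inner (t : ℕ) :
    burnedSet G (fun i : Fin k => if h : (i : ℕ) < t then greedy G x i else x i) t
      = burnedSet G (fun i : Fin k => greedy G x i) t := by
  rcases le_or_gt t k with h | h
  · refine burnedSet_congr G _ _ h h (fun i hi => ?_)
    simp [hi]
  · have : (fun i : Fin k => if h : (i : ℕ) < t then greedy G x i else x i)
        = fun i : Fin k => greedy G x (i : ℕ) := by
      funext i
      simp [i.2.trans h]
    rw [this]

open Classical in
lemma greedy_eq (t : ℕ) :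
    greedy G x t =
      (if h2 : ∃ hk : t < k, x ⟨t, hk⟩ ∉ burnedSet G (fun i : Fin k => greedy G x i) t
        then x ⟨t, h2.choose⟩
      else if h : ∃ v, v ∉ burnedSet G (fun i : Fin k => greedy G x i) t then h.choose
      else Classical.arbitrary V) := by
  rw [greedy]
  simp only [greedy_inner G x t]

lemma greedy_burns (t : ℕ) :
    burnedSet G x t ⊆ burnedSet G (fun i : Fin k => greedy G x i) t := by
  induction t with
  | zero => exact subset_rfl
  | succ n ih =>
    rintro v (((hv | hv) | hv))
    · exact Or.inl (Or.inl (ih hv))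
    · obtain ⟨u, hu, huv⟩ := hv
      exact Or.inl (Or.inr ⟨u, ih hu, huv⟩)
    · obtain ⟨h, rfl⟩ := hv
      by_cases hb : x ⟨n, h⟩ ∈ burnedSet G (fun i : Fin k => greedy G x i) n
      · exact Or.inl (Or.inl hb)
      · refine Or.inr ⟨h, ?_⟩
        show x ⟨n, h⟩ = greedy G x n
        rw [greedy_eq]
        have h2 : ∃ hk : n < k, x ⟨n, hk⟩ ∉ burnedSet G (fun i : Fin k => greedy G x i) n := ⟨h, hb⟩
        rw [dif_pos h2]

lemma greedy_unburned (t : ℕ)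
    (h : ∃ v, v ∉ burnedSet G (fun i : Fin k => greedy G x i) t) :
    greedy G x t ∉ burnedSet G (fun i : Fin k => greedy G x i) t := by
  rw [greedy_eq]
  split_ifs with h2
  · exact h2.choose_spec
  · exact h.choose_spec

lemma exists_isBurningSeq_of_burnedSet_univ
    (hx : burnedSet G x k = Set.univ) :
    ∃ k' ≤ k, ∃ y : Fin k' → V, IsBurningSeq G y := by
  classical
  set g : Fin k → V := fun i : Fin k => greedy G x i with hg
  have hgk : burnedSet G g k = Set.univ :=
    Set.eq_univ_of_univ_subset (hx ▸ greedy_burns G x k)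
  have hex : ∃ t, burnedSet G g t = Set.univ := ⟨k, hgk⟩
  set k' := Nat.find hex with hk'
  have hk'le : k' ≤ k := Nat.find_le hgk
  refine ⟨k', hk'le, fun i : Fin k' => greedy G x i, ?_, ?_⟩
  · intro i
    have hagree : burnedSet G (fun j : Fin k' => greedy G x (j : ℕ)) (i : ℕ)
        = burnedSet G g (i : ℕ) := by
      refine burnedSet_congr G _ _ (le_of_lt i.2) (le_of_lt (lt_of_lt_of_le i.2 hk'le))
        (fun j hj => rfl)
    rw [hagree]
    have hne : burnedSet G g (i : ℕ) ≠ Set.univ := Nat.find_min hex i.2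
    have hsome : ∃ v, v ∉ burnedSet G g (i : ℕ) := by
      by_contra hc
      push_neg at hc
      exact hne (Set.eq_univ_of_forall hc)
    exact greedy_unburned G x i hsome
  · have : burnedSet G (fun j : Fin k' => greedy G x (j : ℕ)) k' = burnedSet G g k' := by
      exact burnedSet_congr G _ _ le_rfl hk'le (fun j hj => rfl)
    rw [this]
    exact Nat.find_spec hex

section PathForest
variable {s : ℕ} {l : Fin s → ℕ}

lemma sigma_ext' {v w : Σ j : Fin s, Fin (l j)} (h1 : v.1 = w.1)
    (h2 : (v.2 : ℕ) = (w.2 : ℕ)) : v = w := by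
  obtain ⟨j1, a1⟩ := v
  obtain ⟨j2, a2⟩ := w
  dsimp at h1
  subst h1
  dsimp at h2
  exact congrArg (Sigma.mk j1) (Fin.val_injective h2)

lemma pathForest_adj (u v : Σ j : Fin s, Fin (l j)) :
    (pathForest l).Adj u v ↔ u.1 = v.1 ∧ ((u.2 : ℕ) + 1 = (v.2 : ℕ) ∨ (v.2 : ℕ) + 1 = (u.2 : ℕ)) := by
  show (u ≠ v ∧ _) ↔ _
  constructor
  · rintro ⟨hne, (⟨h1, h2⟩ | ⟨h1, h2⟩)⟩
    exacts [⟨h1, Or.inl h2⟩, ⟨h1.symm, Or.inr h2⟩]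
  · rintro ⟨h1, h2⟩
    refine ⟨fun he => by subst he; omega, ?_⟩
    rcases h2 with h2 | h2
    exacts [Or.inl ⟨h1, h2⟩, Or.inr ⟨h1.symm, h2⟩]

lemma burnedSet_pathForest {k : ℕ} (x : Fin k → Σ j : Fin s, Fin (l j)) (t : ℕ) :
    burnedSet (pathForest l) x t =
      {v | ∃ i : Fin k, (i : ℕ) < t ∧ v.1 = (x i).1 ∧
        Nat.dist (v.2 : ℕ) ((x i).2 : ℕ) ≤ t - 1 - (i : ℕ)} := by
  have hd : ∀ a b : ℕ, Nat.dist a b = (a - b) + (b - a) := fun a b => rfl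
  induction t with
  | zero =>
    ext v
    simp [burnedSet]
  | succ n ih =>
    ext v
    show v ∈ _ ∪ _ ∪ _ ↔ _
    simp only [ih, Set.mem_union, Set.mem_setOf_eq]
    constructor
    · rintro ((⟨i, hi, h1, h2⟩ | ⟨u, ⟨i, hi, h1, h2⟩, hadj⟩) | ⟨h, rfl⟩)
      · exact ⟨i, hi.trans (Nat.lt_succ_self n), h1, le_trans h2 (by omega)⟩
      · rw [pathForest_adj] at hadj
        obtain ⟨hc, hn⟩ := hadj
        refine ⟨i, hi.trans (Nat.lt_succ_self n), hc ▸ h1, ?_⟩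
        rw [hd] at h2 ⊢
        omega
      · exact ⟨⟨n, h⟩, Nat.lt_succ_self n, rfl, by rw [hd]; omega⟩
    · rintro ⟨i, hi, h1, h2⟩
      rcases Nat.lt_or_ge (i : ℕ) n with hlt | hge
      · by_cases h2' : Nat.dist (v.2 : ℕ) ((x i).2 : ℕ) ≤ n - 1 - (i : ℕ)
        · exact Or.inl (Or.inl ⟨i, hlt, h1, h2'⟩)
        · -- need a neighbor step toward the source
          rw [hd] at h2 h2'
          set a := (v.2 : ℕ) with ha
          set c := ((x i).2 : ℕ) with hc
          have hane : a ≠ c := by omega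
          have hcl : c < l v.1 := h1 ▸ ((x i).2).2
          have hal : a < l v.1 := v.2.2
          set b : ℕ := if a < c then a + 1 else a - 1 with hb
          have hbl : b < l v.1 := by
            rcases Nat.lt_or_ge a c with h' | h'
            · simp only [hb, if_pos h']; omega
            · simp only [hb, if_neg (not_lt.mpr h')]; omega
          refine Or.inl (Or.inr ⟨⟨v.1, ⟨b, hbl⟩⟩, ⟨i, hlt, h1, ?_⟩, ?_⟩)
          · show Nat.dist b c ≤ n - 1 - (i : ℕ)
            rw [hd]
            rcases Nat.lt_or_ge a c with h' | h'
            · have hbe : b = a + 1 := by simp [hb, h']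
              omega
            · have hbe : b = a - 1 := by simp [hb, not_lt.mpr h']
              omega
          · rw [pathForest_adj]
            refine ⟨rfl, ?_⟩
            show b + 1 = a ∨ a + 1 = b
            rcases Nat.lt_or_ge a c with h' | h'
            · right; simp only [hb, if_pos h']
            · left; simp only [hb, if_neg (not_lt.mpr h')]; omega
          
      · have hieq : (i : ℕ) = n := le_antisymm (Nat.lt_succ_iff.mp hi) hge
        have h : n < k := hieq ▸ i.2
        refine Or.inr ⟨h, ?_⟩
        have : (⟨n, h⟩ : Fin k) = i := by exact Fin.ext hieq.symm
        rw [this]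
        rw [hd] at h2
        refine sigma_ext' h1 ?_
        omega

end PathForest

section Main
variable {s : ℕ} {l : Fin s → ℕ}

lemma forward_dir (hpos : ∀ j, 1 ≤ l j) (hs : 0 < s) {k0 k : ℕ} (hk : k0 ≤ k)
    (x : Fin k0 → Σ j : Fin s, Fin (l j))
    (hx : burnedSet (pathForest l) x k0 = Set.univ) :
    ∃ A : Fin s → Finset ℕ,
      (∀ j, A j ⊆ (Finset.range k).image fun i => 2 * i + 1) ∧
      (∀ i j, i ≠ j → Disjoint (A i) (A j)) ∧
      (∀ j, l j ≤ (A j).sum id) := by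
  classical
  have hd : ∀ a b : ℕ, Nat.dist a b = (a - b) + (b - a) := fun a b => rfl
  have hcov : ∀ v : Σ j : Fin s, Fin (l j), ∃ i : Fin k0, v.1 = (x i).1 ∧
      Nat.dist (v.2 : ℕ) ((x i).2 : ℕ) ≤ k0 - 1 - (i : ℕ) := by
    intro v
    have : v ∈ burnedSet (pathForest l) x k0 := hx ▸ Set.mem_univ v
    rw [burnedSet_pathForest] at this
    obtain ⟨i, _, h1, h2⟩ := this
    exact ⟨i, h1, h2⟩
  have hk0 : 1 ≤ k0 := by
    by_contra hc
    have : k0 = 0 := by omega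
    subst this
    have v0 : Σ j : Fin s, Fin (l j) := ⟨⟨0, hs⟩, ⟨0, hpos _⟩⟩
    obtain ⟨i, _⟩ := hcov v0
    exact absurd i.2 (by omega)
  -- injectivity of the weight map
  have hinj : ∀ i1 i2 : Fin k0, 2 * (k0 - 1 - (i1 : ℕ)) + 1 = 2 * (k0 - 1 - (i2 : ℕ)) + 1 →
      i1 = i2 := by
    intro i1 i2 h
    have := i1.2; have := i2.2
    exact Fin.ext (by omega)
  refine ⟨fun j => (Finset.univ.filter (fun i : Fin k0 => (x i).1 = j)).image
      (fun i : Fin k0 => 2 * (k0 - 1 - (i : ℕ)) + 1), ?_, ?_, ?_⟩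
  · intro j m hm
    simp only [Finset.mem_image, Finset.mem_filter] at hm ⊢
    obtain ⟨i, _, rfl⟩ := hm
    exact ⟨k0 - 1 - (i : ℕ), Finset.mem_range.mpr (by have := i.2; omega), rfl⟩
  · intro j1 j2 hne
    rw [Finset.disjoint_left]
    intro m hm1 hm2
    simp only [Finset.mem_image, Finset.mem_filter, Finset.mem_univ, true_and] at hm1 hm2
    obtain ⟨i1, hi1, rfl⟩ := hm1
    obtain ⟨i2, hi2, he⟩ := hm2
    cases hinj i2 i1 he
    exact hne (hi1 ▸ hi2 ▸ rfl)
  · intro j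
    have hsum_eq : ((Finset.univ.filter (fun i : Fin k0 => (x i).1 = j)).image
        (fun i : Fin k0 => 2 * (k0 - 1 - (i : ℕ)) + 1)).sum id
        = ∑ i ∈ Finset.univ.filter (fun i : Fin k0 => (x i).1 = j),
            (2 * (k0 - 1 - (i : ℕ)) + 1) := by
      rw [Finset.sum_image (fun i1 _ i2 _ h => hinj i1 i2 h)]
      rfl
    rw [hsum_eq]
    -- covering bound
    have hcard : (l j) = (Finset.univ : Finset (Fin (l j))).card := by
      simp
    have hsub : (Finset.univ : Finset (Fin (l j))) ⊆
        (Finset.univ.filter (fun i : Fin k0 => (x i).1 = j)).biUnion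
          (fun i => Finset.univ.filter
            (fun a : Fin (l j) => Nat.dist (a : ℕ) ((x i).2 : ℕ) ≤ k0 - 1 - (i : ℕ))) := by
      intro a _
      obtain ⟨i, h1, h2⟩ := hcov ⟨j, a⟩
      simp only [Finset.mem_biUnion, Finset.mem_filter, Finset.mem_univ, true_and]
      exact ⟨i, h1.symm, h2⟩
    have hpiece : ∀ i : Fin k0,
        (Finset.univ.filter
          (fun a : Fin (l j) => Nat.dist (a : ℕ) ((x i).2 : ℕ) ≤ k0 - 1 - (i : ℕ))).card
          ≤ 2 * (k0 - 1 - (i : ℕ)) + 1 := by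
      intro i
      set c := ((x i).2 : ℕ)
      set r := k0 - 1 - (i : ℕ)
      have : (Finset.univ.filter
          (fun a : Fin (l j) => Nat.dist (a : ℕ) c ≤ r)).card ≤ (Finset.Icc (c - r) (c + r)).card := by
        refine Finset.card_le_card_of_injOn (fun a => (a : ℕ)) ?_ ?_
        · intro a ha
          simp only [Finset.coe_filter, Finset.mem_coe, Finset.mem_filter, Finset.mem_univ, true_and, Set.mem_setOf_eq] at ha
          rw [hd] at ha
          simp only [Finset.coe_Icc, Set.mem_Icc, Finset.mem_coe, Finset.mem_Icc]
          omega
        · intro a1 _ a2 _ h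
          exact Fin.val_injective h
      refine this.trans ?_
      rw [Nat.card_Icc]
      omega
    calc l j = (Finset.univ : Finset (Fin (l j))).card := hcard
      _ ≤ _ := Finset.card_le_card hsub
      _ ≤ ∑ i ∈ Finset.univ.filter (fun i : Fin k0 => (x i).1 = j),
            (Finset.univ.filter
              (fun a : Fin (l j) => Nat.dist (a : ℕ) ((x i).2 : ℕ) ≤ k0 - 1 - (i : ℕ))).card :=
        Finset.card_biUnion_le
      _ ≤ _ := Finset.sum_le_sum (fun i _ => hpiece i)

end Main

section Back
variable {s : ℕ}

def Rset (A : Fin s → Finset ℕ) (k : ℕ) (j : Fin s) : Finset ℕ :=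
  (Finset.range k).filter (fun r => 2 * r + 1 ∈ A j)

def Pval (A : Fin s → Finset ℕ) (k : ℕ) (j : Fin s) (r : ℕ) : ℕ :=
  ∑ r' ∈ (Rset A k j).filter (· < r), (2 * r' + 1)

def cval (l : Fin s → ℕ) (A : Fin s → Finset ℕ) (k : ℕ) (j : Fin s) (r : ℕ) : ℕ :=
  min (Pval A k j r + r) (l j - 1)

variable {l : Fin s → ℕ}

lemma cover_key (hpos : ∀ j, 1 ≤ l j) {k : ℕ} (A : Fin s → Finset ℕ)
    (hsub : ∀ j, A j ⊆ (Finset.range k).image fun i => 2 * i + 1)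
    (hsum : ∀ j, l j ≤ (A j).sum id) (j : Fin s) (a : ℕ) (ha : a < l j) :
    ∃ r ∈ Rset A k j, cval l A k j r - r ≤ a ∧ a ≤ cval l A k j r + r := by
  classical
  have hAR : (Rset A k j).image (fun r => 2 * r + 1) = A j := by
    ext m
    simp only [Finset.mem_image, Rset, Finset.mem_filter, Finset.mem_range]
    constructor
    · rintro ⟨r, ⟨_, hm⟩, rfl⟩; exact hm
    · intro hm
      obtain ⟨r, hr, rfl⟩ := by simpa using hsub j hm
      exact ⟨r, ⟨hr, hm⟩, rfl⟩
  have hsumR : l j ≤ ∑ r ∈ Rset A k j, (2 * r + 1) := by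
    have : (A j).sum id = ∑ r ∈ Rset A k j, (2 * r + 1) := by
      rw [← hAR, Finset.sum_image (fun a _ b _ h => by omega)]
      rfl
    rw [← this]; exact hsum j
  set S : ℕ → ℕ := fun r => ∑ r' ∈ (Rset A k j).filter (· ≤ r), (2 * r' + 1) with hS
  have hRne : (Rset A k j).Nonempty := by
    by_contra h
    rw [Finset.not_nonempty_iff_eq_empty] at h
    rw [h, Finset.sum_empty] at hsumR
    have := hpos j; omega
  have hT : ((Rset A k j).filter (fun r => a < S r)).Nonempty := by
    refine ⟨(Rset A k j).max' hRne, Finset.mem_filter.mpr ⟨(Rset A k j).max'_mem hRne, ?_⟩⟩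
    have he : (Rset A k j).filter (· ≤ (Rset A k j).max' hRne) = Rset A k j :=
      Finset.filter_true_of_mem (fun r hr => Finset.le_max' _ r hr)
    show a < S _
    rw [hS]
    simp only [he]
    omega
  set r := ((Rset A k j).filter (fun r => a < S r)).min' hT with hrdef
  have hrmem' := Finset.min'_mem _ hT
  rw [Finset.mem_filter] at hrmem'
  obtain ⟨hrR, hra⟩ := hrmem'
  have hsplit : S r = Pval A k j r + (2 * r + 1) := by
    have hins : (Rset A k j).filter (· ≤ r) = insert r ((Rset A k j).filter (· < r)) := by
      ext r'
      simp only [Finset.mem_insert, Finset.mem_filter]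
      constructor
      · rintro ⟨h1, h2⟩
        rcases eq_or_lt_of_le h2 with h | h
        · exact Or.inl h
        · exact Or.imp_right (fun _ => ⟨h1, h⟩) (Or.inr trivial)
      · rintro (rfl | ⟨h1, h2⟩)
        · exact ⟨hrR, le_refl _⟩
        · exact ⟨h1, le_of_lt h2⟩
    show (∑ r' ∈ (Rset A k j).filter (· ≤ r), (2 * r' + 1)) = _
    rw [hins, Finset.sum_insert (by simp)]
    rw [Pval]
    omega
  have hPa : Pval A k j r ≤ a := by
    by_contra hc
    push_neg at hc
    rcases Finset.eq_empty_or_nonempty ((Rset A k j).filter (· < r)) with he | hne2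
    · rw [Pval, he, Finset.sum_empty] at hc; omega
    · set r2 := ((Rset A k j).filter (· < r)).max' hne2 with hr2
      have hr2mem := Finset.max'_mem _ hne2
      rw [Finset.mem_filter] at hr2mem
      obtain ⟨hr2R, hr2lt⟩ := hr2mem
      have heq : (Rset A k j).filter (· ≤ r2) = (Rset A k j).filter (· < r) := by
        ext r'
        simp only [Finset.mem_filter]
        constructor
        · rintro ⟨h1, h2⟩
          exact ⟨h1, lt_of_le_of_lt h2 hr2lt⟩
        · rintro ⟨h1, h2⟩
          exact ⟨h1, Finset.le_max' ((Rset A k j).filter (· < r)) r' (Finset.mem_filter.mpr ⟨h1, h2⟩)⟩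
      have hS2 : S r2 = Pval A k j r := by
        show (∑ r' ∈ (Rset A k j).filter (· ≤ r2), (2 * r' + 1)) = _
        rw [heq, Pval]
      have : r ≤ r2 := Finset.min'_le ((Rset A k j).filter (fun r => a < S r)) r2 (Finset.mem_filter.mpr ⟨hr2R, by omega⟩)
      omega
  have hra2 : a < Pval A k j r + (2 * r + 1) := by rw [← hsplit]; exact hra
  refine ⟨r, hrR, ?_, ?_⟩ <;> rw [cval] <;>
    rcases le_total (Pval A k j r + r) (l j - 1) with h | h
  · rw [min_eq_left h]; omega
  · rw [min_eq_right h]; omega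
  · rw [min_eq_left h]; omega
  · rw [min_eq_right h]; omega

lemma backward_cover (hpos : ∀ j, 1 ≤ l j) (hs : 0 < s) {k : ℕ} (A : Fin s → Finset ℕ)
    (hsub : ∀ j, A j ⊆ (Finset.range k).image fun i => 2 * i + 1)
    (hdisj : ∀ i j, i ≠ j → Disjoint (A i) (A j))
    (hsum : ∀ j, l j ≤ (A j).sum id) :
    ∃ x : Fin k → Σ j : Fin s, Fin (l j), burnedSet (pathForest l) x k = Set.univ := by
  classical
  have hd : ∀ a b : ℕ, Nat.dist a b = (a - b) + (b - a) := fun a b => rfl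
  have hclt : ∀ j r, cval l A k j r < l j := by
    intro j r
    have := hpos j
    rw [cval]
    omega
  set x : Fin k → Σ j : Fin s, Fin (l j) := fun i =>
    if h : ∃ j, 2 * (k - 1 - (i : ℕ)) + 1 ∈ A j then
      ⟨h.choose, ⟨cval l A k h.choose (k - 1 - (i : ℕ)), hclt _ _⟩⟩
    else ⟨⟨0, hs⟩, ⟨0, hpos _⟩⟩ with hx
  have hxspec : ∀ (i : Fin k) (j : Fin s), 2 * (k - 1 - (i : ℕ)) + 1 ∈ A j →
      (x i).1 = j ∧ ((x i).2 : ℕ) = cval l A k j (k - 1 - (i : ℕ)) := by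
    intro i j hj
    have h : ∃ j', 2 * (k - 1 - (i : ℕ)) + 1 ∈ A j' := ⟨j, hj⟩
    have hxe : x i = ⟨h.choose, ⟨cval l A k h.choose (k - 1 - (i : ℕ)), hclt _ _⟩⟩ := by
      rw [hx]; exact dif_pos h
    have hje : h.choose = j := by
      by_contra hne
      exact Finset.disjoint_left.mp (hdisj _ _ hne) h.choose_spec hj
    rw [hxe]
    exact ⟨hje, by rw [hje]⟩
  refine ⟨x, ?_⟩
  rw [burnedSet_pathForest]
  ext v
  simp only [Set.mem_setOf_eq, Set.mem_univ, iff_true]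
  obtain ⟨j, a⟩ := v
  obtain ⟨r, hrR, hlo, hhi⟩ := cover_key hpos A hsub hsum j (a : ℕ) a.2
  rw [Rset, Finset.mem_filter, Finset.mem_range] at hrR
  obtain ⟨hrk, hrA⟩ := hrR
  have hik : k - 1 - r < k := by omega
  refine ⟨⟨k - 1 - r, hik⟩, by omega, ?_⟩
  have hre : k - 1 - ((⟨k - 1 - r, hik⟩ : Fin k) : ℕ) = r := by
    show k - 1 - (k - 1 - r) = r
    omega
  obtain ⟨h1, h2⟩ := hxspec ⟨k - 1 - r, hik⟩ j (by rw [hre]; exact hrA)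
  refine ⟨h1.symm, ?_⟩
  show Nat.dist (a : ℕ) ((x ⟨k - 1 - r, hik⟩).2 : ℕ) ≤ k - 1 - ((⟨k - 1 - r, hik⟩ : Fin k) : ℕ)
  rw [hd, h2, hre]
  omega

end Back

/-- A path-forest with component orders `l 0 ≥ l 1 ≥ … ≥ l (s-1)` has burning
number at most `k` iff there are pairwise disjoint subsets `A j` of
`{1, 3, …, 2k-1}` with `∑ A j ≥ l j` for each `j`. -/
theorem burningNumber_pathForest_le_iff {s : ℕ} (l : Fin s → ℕ)
    (hmono : ∀ i j : Fin s, i ≤ j → l j ≤ l i) (hpos : ∀ j, 1 ≤ l j) (k : ℕ) :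
    burningNumber (pathForest l) ≤ k ↔
      ∃ A : Fin s → Finset ℕ,
        (∀ j, A j ⊆ (Finset.range k).image fun i => 2 * i + 1) ∧
        (∀ i j, i ≠ j → Disjoint (A i) (A j)) ∧
        (∀ j, l j ≤ (A j).sum id) := by
  classical
  rcases Nat.eq_zero_or_pos s with hs0 | hs
  · subst hs0
    constructor
    · intro _
      exact ⟨fun _ => ∅, fun j => j.elim0, fun i => i.elim0, fun j => j.elim0⟩
    · intro _
      have h0 : 0 ∈ {k' | ∃ x : Fin k' → (Σ j : Fin 0, Fin (l j)),
          IsBurningSeq (pathForest l) x} := by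
        refine ⟨Fin.elim0, fun i => i.elim0, ?_⟩
        ext v
        exact (v.1).elim0
      exact le_trans (Nat.sInf_le h0) (Nat.zero_le k)
  · haveI : Nonempty (Σ j : Fin s, Fin (l j)) := ⟨⟨⟨0, hs⟩, ⟨0, hpos _⟩⟩⟩
    constructor
    · intro hbn
      have hcov : burnedSet (pathForest l)
          (fun i => (Fintype.equivFin (Σ j : Fin s, Fin (l j))).symm i)
          (Fintype.card (Σ j : Fin s, Fin (l j))) = Set.univ := by
        rw [burnedSet_pathForest]
        ext v
        simp only [Set.mem_setOf_eq, Set.mem_univ, iff_true]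
        refine ⟨(Fintype.equivFin _) v, ((Fintype.equivFin _) v).2, ?_, ?_⟩
        · rw [Equiv.symm_apply_apply]
        · rw [Equiv.symm_apply_apply, Nat.dist_self]
          exact Nat.zero_le _
      obtain ⟨k', hk', y, hy⟩ := exists_isBurningSeq_of_burnedSet_univ (pathForest l) _ hcov
      have hSne : {k' | ∃ x : Fin k' → (Σ j : Fin s, Fin (l j)),
          IsBurningSeq (pathForest l) x}.Nonempty := ⟨k', y, hy⟩
      obtain ⟨x, _, hx2⟩ := Nat.sInf_mem hSne
      exact forward_dir hpos hs hbn x hx2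
    · rintro ⟨A, hsub, hdisj, hsum⟩
      obtain ⟨x, hx⟩ := backward_cover hpos hs A hsub hdisj hsum
      obtain ⟨k', hk', y, hy⟩ := exists_isBurningSeq_of_burnedSet_univ (pathForest l) x hx
      exact le_trans (Nat.sInf_le ⟨y, hy⟩) hk'
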